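/- In a countably compact Hausdorff space Y, for every infinite subset I there exist a point y ∈ Y, a sequence of distinct points (x_n) in I, and sequences of open sets (V_n), (U_n) such that for all n: x_n ∈ V_n ⊆ U_{n-1}, y ∈ U_n ⊆ U_{n-1}, and V_n ∩ U_n = ∅; in particular the V_n are pairwise disjoint. -/

import Mathlib

open Filter Topology

/-- In a countably compact Hausdorff space `Y`, for every infinite `I ⊆ Y`
there exist a point `y`, distinct points `x_n ∈ I` and open sets `V_n, U_n`
with `x_n ∈ V_n ⊆ U_{n-1}`, `y ∈ U_n ⊆ U_{n-1}` and `V_n ∩ U_n = ∅`; in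
particular the `V_n` are pairwise disjoint. -/
theorem stmt19 {Y : Type*} [TopologicalSpace Y] [T2Space Y]
    (hcc : ∀ S : Set Y, S.Infinite → ∃ y : Y, AccPt y (𝓟 S))
    (I : Set Y) (hI : I.Infinite) :
    ∃ (y : Y) (x : ℕ → Y) (V U : ℕ → Set Y),
      Function.Injective x ∧ (∀ n, x n ∈ I) ∧
      (∀ n, IsOpen (V n) ∧ IsOpen (U n) ∧ x n ∈ V n ∧ y ∈ U n ∧
        V n ∩ U n = ∅) ∧
      (∀ n, V (n + 1) ⊆ U n ∧ U (n + 1) ⊆ U n) ∧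
      Pairwise (Function.onFun Disjoint V) := by
  obtain ⟨y, hy⟩ := hcc I hI
  have key : ∀ U : Set Y, IsOpen U → y ∈ U →
      ∃ x : Y, ∃ V U' : Set Y, x ∈ I ∧ IsOpen V ∧ IsOpen U' ∧ x ∈ V ∧ y ∈ U' ∧
        V ∩ U' = ∅ ∧ V ⊆ U ∧ U' ⊆ U := by
    intro U hU hyU
    obtain ⟨x, ⟨hxU, hxI⟩, hxy⟩ := accPt_iff_nhds.mp hy U (hU.mem_nhds hyU)
    obtain ⟨A, B, hA, hB, hxA, hyB, hAB⟩ := t2_separation hxy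
    refine ⟨x, A ∩ U, B ∩ U, hxI, hA.inter hU, hB.inter hU, ⟨hxA, hxU⟩, ⟨hyB, hyU⟩,
      ?_, Set.inter_subset_right, Set.inter_subset_right⟩
    rw [Set.inter_inter_inter_comm, hAB.inter_eq, Set.empty_inter]
  choose xf Vf Uf hxfI hVo hUo hxV hyU hVU hVs hUs using key
  set T := {U : Set Y // IsOpen U ∧ y ∈ U} with hT
  let next : T → T := fun t => ⟨Uf t.1 t.2.1 t.2.2, hUo t.1 t.2.1 t.2.2, hyU t.1 t.2.1 t.2.2⟩
  let W : ℕ → T := fun n => Nat.rec ⟨Set.univ, isOpen_univ, trivial⟩ (fun _ t => next t) n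
  have hWsucc : ∀ n, W (n + 1) = next (W n) := fun n => rfl
  let x : ℕ → Y := fun n => xf (W n).1 (W n).2.1 (W n).2.2
  let V : ℕ → Set Y := fun n => Vf (W n).1 (W n).2.1 (W n).2.2
  let U : ℕ → Set Y := fun n => (W (n + 1)).1
  have hUdef : ∀ n, U n = Uf (W n).1 (W n).2.1 (W n).2.2 := fun n => rfl
  have hxI' : ∀ n, x n ∈ I := fun n => hxfI _ _ _
  have hVo' : ∀ n, IsOpen (V n) := fun n => hVo _ _ _
  have hUo' : ∀ n, IsOpen (U n) := fun n => (W (n + 1)).2.1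
  have hxV' : ∀ n, x n ∈ V n := fun n => hxV _ _ _
  have hyU' : ∀ n, y ∈ U n := fun n => (W (n + 1)).2.2
  have hVU' : ∀ n, V n ∩ U n = ∅ := fun n => hVU _ _ _
  have hVsub : ∀ n, V (n + 1) ⊆ U n := fun n => hVs (W (n+1)).1 (W (n+1)).2.1 (W (n+1)).2.2
  have hUsub : ∀ n, U (n + 1) ⊆ U n := fun n => hUs (W (n+1)).1 (W (n+1)).2.1 (W (n+1)).2.2
  have hchain : ∀ m n, m ≤ n → U n ⊆ U m := by
    intro m n hmn
    induction n, hmn using Nat.le_induction with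
    | base => exact le_refl _
    | succ n hmn ih => exact (hUsub n).trans ih
  have hVinU : ∀ m n, m < n → V n ⊆ U m := by
    intro m n hmn
    obtain ⟨k, rfl⟩ := Nat.exists_eq_add_of_lt hmn
    exact (hVsub _).trans (hchain m (m + k) (Nat.le_add_right m k))
  have hnotU : ∀ n, x n ∉ U n := by
    intro n hn
    have : x n ∈ V n ∩ U n := ⟨hxV' n, hn⟩
    simp [hVU' n] at this
  refine ⟨y, x, V, U, ?_, hxI', fun n => ⟨hVo' n, hUo' n, hxV' n, hyU' n, hVU' n⟩,
    fun n => ⟨hVsub n, hUsub n⟩, ?_⟩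
  · intro m n hmn
    by_contra h
    rcases Nat.lt_or_ge m n with hlt | hge
    · exact hnotU m (hmn ▸ hVinU m n hlt (hxV' n))
    · have hlt : n < m := lt_of_le_of_ne hge (Ne.symm h)
      exact hnotU n (hmn ▸ hVinU n m hlt (hxV' m))
  · intro m n hmn
    rcases Nat.lt_or_ge m n with hlt | hge
    · refine Set.disjoint_left.mpr fun a haM haN => ?_
      have : a ∈ V m ∩ U m := ⟨haM, hVinU m n hlt haN⟩
      simp [hVU' m] at this
    · have hlt : n < m := lt_of_le_of_ne hge (Ne.symm hmn)
      refine Set.disjoint_left.mpr fun a haM haN => ?_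
      have : a ∈ V n ∩ U n := ⟨haN, hVinU n m hlt haM⟩
      simp [hVU' n] at this
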